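/- Let Φ(B) = Σᵢ Dᵢ* B Dᵢ be a unital completely positive map in Kraus form and B a bounded selfadjoint operator. Then Φ(B) = B and Φ(B²) = B² hold simultaneously if and only if B Dᵢ = Dᵢ B for all i. -/

import Mathlib

open ContinuousLinearMap

open scoped InnerProductSpace in
/-- Let `Φ(B) = Σᵢ Dᵢ* B Dᵢ` be a unital completely positive map in Kraus
form (`Σᵢ Dᵢ* Dᵢ = I`, sums converging strongly) and `B` a bounded selfadjoint operator.
Then `Φ(B) = B` and `Φ(B²) = B²` hold simultaneously if and only if `B Dᵢ = Dᵢ B` for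
all `i`. -/
theorem kraus_fixed_point_iff_commutes
    {H : Type*} [NormedAddCommGroup H] [InnerProductSpace ℂ H] [CompleteSpace H]
    {ι : Type*} [Countable ι]
    (D : ι → (H →L[ℂ] H))
    (hunital : ∀ x : H, HasSum (fun i => (adjoint (D i)) ((D i) x)) x)
    (Φ : (H →L[ℂ] H) → (H →L[ℂ] H))
    (hΦ : ∀ (B : H →L[ℂ] H) (x : H),
      HasSum (fun i => (adjoint (D i)) (B ((D i) x))) ((Φ B) x))
    (B : H →L[ℂ] H) (hBsa : IsSelfAdjoint B) :
    (Φ B = B ∧ Φ (B ^ 2) = B ^ 2) ↔ ∀ i, B * D i = D i * B := by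
  have hadj : adjoint B = B := hBsa
  have hBin : ∀ u v : H, ⟪B u, v⟫_ℂ = ⟪u, B v⟫_ℂ := fun u v => by
    conv_lhs => rw [← hadj]
    exact adjoint_inner_left _ _ _
  have hre : ∀ y : H, ‖y‖ ^ 2 = Complex.reCLM (⟪y, y⟫_ℂ) := fun y => by
    rw [Complex.reCLM_apply, inner_self_eq_norm_sq_to_K]
    norm_cast
  have hB2 : ∀ u v : H, ⟪u, (B ^ 2) v⟫_ℂ = ⟪B u, B v⟫_ℂ := fun u v => by
    rw [pow_two, ContinuousLinearMap.mul_apply, ← hBin]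
  constructor
  · rintro ⟨h1, h2⟩ i
    ext x
    simp only [ContinuousLinearMap.mul_apply]
    set f : ι → ℝ := fun i => ‖B ((D i) x) - (D i) (B x)‖ ^ 2 with hf
    have ha : HasSum (fun i => ‖B ((D i) x)‖ ^ 2) (‖B x‖ ^ 2) := by
      have := hΦ (B ^ 2) x
      rw [h2] at this
      have := (Complex.reCLM.hasSum ((innerSL ℂ x).hasSum this))
      convert this using 2 with i
      · rw [innerSL_apply_apply, adjoint_inner_right, hB2]
        exact hre _
      · rw [innerSL_apply_apply, hB2]
        exact hre _
    have hb : HasSum (fun i => Complex.re ⟪B ((D i) x), (D i) (B x)⟫_ℂ) (‖B x‖ ^ 2) := by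
      have := hΦ B (B x)
      rw [h1] at this
      have := (Complex.reCLM.hasSum ((innerSL ℂ x).hasSum this))
      convert this using 2 with i
      · rw [innerSL_apply_apply, adjoint_inner_right, ← hBin]
        simp
      · rw [innerSL_apply_apply, ← hBin]
        exact hre _
    have hc : HasSum (fun i => ‖(D i) (B x)‖ ^ 2) (‖B x‖ ^ 2) := by
      have := hunital (B x)
      have := (Complex.reCLM.hasSum ((innerSL ℂ (B x)).hasSum this))
      convert this using 2 with i
      · rw [innerSL_apply_apply, adjoint_inner_right]
        exact hre _
      · rw [innerSL_apply_apply]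
        exact hre _
    have hsum : HasSum f 0 := by
      have : HasSum (fun i => ‖B ((D i) x)‖ ^ 2 - 2 * Complex.re ⟪B ((D i) x), (D i) (B x)⟫_ℂ
          + ‖(D i) (B x)‖ ^ 2) (‖B x‖ ^ 2 - 2 * ‖B x‖ ^ 2 + ‖B x‖ ^ 2) :=
        (ha.sub (hb.mul_left 2)).add hc
      have h0 : ‖B x‖ ^ 2 - 2 * ‖B x‖ ^ 2 + ‖B x‖ ^ 2 = 0 := by ring
      rw [h0] at this
      convert this using 2 with i
      rw [hf]
      exact norm_sub_sq (𝕜 := ℂ) _ _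
    have hz : f = 0 := (hasSum_zero_iff_of_nonneg (fun i => sq_nonneg _)).mp hsum
    have : f i = 0 := by rw [hz]; rfl
    rw [hf] at this
    have := pow_eq_zero_iff (n := 2) (by norm_num) |>.mp this
    have := norm_eq_zero.mp this
    exact sub_eq_zero.mp this
  · intro hcomm
    have key : ∀ (A : H →L[ℂ] H), (∀ i, A * D i = D i * A) → Φ A = A := by
      intro A hA
      ext x
      have h1 : HasSum (fun i => (adjoint (D i)) (A ((D i) x))) ((Φ A) x) := hΦ A x
      have h2 : HasSum (fun i => (adjoint (D i)) (A ((D i) x))) (A x) := by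
        have := hunital (A x)
        convert this using 2 with i
        congr 1
        have := congrArg (fun T => T x) (hA i)
        simpa [mul_apply] using this
      exact h1.unique h2
    refine ⟨key B hcomm, key (B ^ 2) fun i => ?_⟩
    rw [pow_two, mul_assoc, hcomm i, ← mul_assoc, hcomm i, mul_assoc]
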